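/- arXiv:1908.03019 — 5 statements merged into one kernel-verified Lean document; each statement's English description precedes it below -/
import Mathlib

section
/- Let X be a set, R : X³ → X³ a map satisfying the functional tetrahedron equation, and σ : X → X an involution (σ ∘ σ = Id) which is a symmetry of R, i.e. (σ × σ × σ) ∘ R ∘ (σ × σ × σ) = R. Then both maps R̃ = (σ × Id × σ) ∘ R ∘ (Id × σ × Id) and R̂ = (Id × σ × Id) ∘ R ∘ (σ × Id × σ) satisfy the functional tetrahedron equation. -/
/-- Apply `R` to components 1, 2, 3 of a 6-tuple. -/
def map123 {X : Type*} (R : X × X × X → X × X × X) :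
    X × X × X × X × X × X → X × X × X × X × X × X :=
  fun (x1, x2, x3, x4, x5, x6) =>
    ((R (x1, x2, x3)).1, (R (x1, x2, x3)).2.1, (R (x1, x2, x3)).2.2, x4, x5, x6)

/-- Apply `R` to components 1, 4, 5 of a 6-tuple. -/
def map145 {X : Type*} (R : X × X × X → X × X × X) :
    X × X × X × X × X × X → X × X × X × X × X × X :=
  fun (x1, x2, x3, x4, x5, x6) =>
    ((R (x1, x4, x5)).1, x2, x3, (R (x1, x4, x5)).2.1, (R (x1, x4, x5)).2.2, x6)

/-- Apply `R` to components 2, 4, 6 of a 6-tuple. -/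
def map246 {X : Type*} (R : X × X × X → X × X × X) :
    X × X × X × X × X × X → X × X × X × X × X × X :=
  fun (x1, x2, x3, x4, x5, x6) =>
    (x1, (R (x2, x4, x6)).1, x3, (R (x2, x4, x6)).2.1, x5, (R (x2, x4, x6)).2.2)

/-- Apply `R` to components 3, 5, 6 of a 6-tuple. -/
def map356 {X : Type*} (R : X × X × X → X × X × X) :
    X × X × X × X × X × X → X × X × X × X × X × X :=
  fun (x1, x2, x3, x4, x5, x6) =>
    (x1, x2, (R (x3, x5, x6)).1, x4, (R (x3, x5, x6)).2.1, (R (x3, x5, x6)).2.2)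

/-- The functional tetrahedron equation. -/
def IsTetrahedron {X : Type*} (R : X × X × X → X × X × X) : Prop :=
  map123 R ∘ map145 R ∘ map246 R ∘ map356 R =
    map356 R ∘ map246 R ∘ map145 R ∘ map123 R

/-- Apply `f`, `g`, `h` to the first, second, third components of a triple. -/
def triple {X : Type*} (f g h : X → X) : X × X × X → X × X × X :=
  fun (a, b, c) => (f a, g b, h c)

/-- an involutive symmetry of a tetrahedron map produces two new
tetrahedron maps. -/
theorem tetrahedron_of_involutive_symmetry {X : Type*} (R : X × X × X → X × X × X)
    (sigma : X → X) (hR : IsTetrahedron R) (hinv : sigma ∘ sigma = id)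
    (hsym : triple sigma sigma sigma ∘ R ∘ triple sigma sigma sigma = R) :
    IsTetrahedron (triple sigma id sigma ∘ R ∘ triple id sigma id) ∧
    IsTetrahedron (triple id sigma id ∘ R ∘ triple sigma id sigma) := by
  
  have hinv' : ∀ x, sigma (sigma x) = x := fun x => congrFun hinv x
  have hsym' : ∀ a b c : X, R (sigma a, sigma b, sigma c) =
      (sigma (R (a,b,c)).1, sigma (R (a,b,c)).2.1, sigma (R (a,b,c)).2.2) := by
    intro a b c
    have h := congrFun hsym (a, b, c)
    simp only [Function.comp, triple] at h
    rw [← h]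
    simp [hinv']
  have hsym2 : ∀ a b c : X, R (sigma a, b, sigma c) =
      (sigma (R (a, sigma b, c)).1, sigma (R (a, sigma b, c)).2.1, sigma (R (a, sigma b, c)).2.2) := by
    intro a b c
    calc R (sigma a, b, sigma c) = R (sigma a, sigma (sigma b), sigma c) := by rw [hinv']
      _ = _ := hsym' a (sigma b) c
  have hsym3 : ∀ a b c : X, R (sigma a, sigma b, c) =
      (sigma (R (a, b, sigma c)).1, sigma (R (a, b, sigma c)).2.1, sigma (R (a, b, sigma c)).2.2) := by
    intro a b c
    calc R (sigma a, sigma b, c) = R (sigma a, sigma b, sigma (sigma c)) := by rw [hinv']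
      _ = _ := hsym' a b (sigma c)
  have hsym4 : ∀ a b c : X, R (a, sigma b, sigma c) =
      (sigma (R (sigma a, b, c)).1, sigma (R (sigma a, b, c)).2.1, sigma (R (sigma a, b, c)).2.2) := by
    intro a b c
    calc R (a, sigma b, sigma c) = R (sigma (sigma a), sigma b, sigma c) := by rw [hinv']
      _ = _ := hsym' (sigma a) b c
  -- R hat = R tilde
  have hhat : (triple id sigma id ∘ R ∘ triple sigma id sigma : X × X × X → X × X × X)
      = triple sigma id sigma ∘ R ∘ triple id sigma id := by
    funext ⟨a, b, c⟩
    simp [triple, hsym2, hinv']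
  set Rt := (triple sigma id sigma ∘ R ∘ triple id sigma id : X × X × X → X × X × X) with hRt
  suffices h : IsTetrahedron Rt by
    refine ⟨h, ?_⟩
    rw [hhat]; exact h
  -- conjugating map D : sigma on components 1,3,4,6
  have hR' := fun x => congrFun hR x
  simp only [IsTetrahedron, Function.comp] at hR' ⊢
  funext ⟨x1, x2, x3, x4, x5, x6⟩
  have key := hR' (sigma x1, x2, sigma x3, sigma x4, x5, sigma x6)
  simp only [map123, map145, map246, map356, hRt, Function.comp, triple, id] at key ⊢
  simp only [hsym', hsym2, hsym3, hsym4, hinv'] at key ⊢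
  simp only [Prod.mk.injEq] at key ⊢
  obtain ⟨k1, k2, k3, k4, k5, k6⟩ := key
  have inj : ∀ a b : X, sigma a = sigma b → a = b := fun a b h => by
    rw [← hinv' a, h, hinv']
  exact ⟨inj _ _ k1, k2, inj _ _ k3, inj _ _ k4, k5, inj _ _ k6⟩
end

section
/- Let X be a set, R : X³ → X³ a map satisfying the functional tetrahedron equation, and σ : X → X an involution which is a symmetry of R, i.e. (σ × σ × σ) ∘ R ∘ (σ × σ × σ) = R. For 1 ≤ i ≤ 6 let σᵢ : X⁶ → X⁶ act as σ on the i-th component and as the identity on the others. Then the following three entwining tetrahedron equations hold as maps X⁶ → X⁶ (composition applies the rightmost map first): (i) R^(123) ∘ (R^(145)∘σ₁) ∘ (R^(246)∘σ₂) ∘ (R^(356)∘σ₃) = (R^(356)∘σ₃) ∘ (R^(246)∘σ₂) ∘ (R^(145)∘σ₁) ∘ R^(123); (ii) (R^(123)∘σ₃) ∘ (R^(145)∘σ₅) ∘ (R^(246)∘σ₆) ∘ R^(356) = R^(356) ∘ (R^(246)∘σ₆) ∘ (R^(145)∘σ₅) ∘ (R^(123)∘σ₃); (iii) (R^(123)∘σ₃)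 ∘ (R^(145)∘σ₁∘σ₅) ∘ (R^(246)∘σ₂∘σ₆) ∘ (R^(356)∘σ₃) = (R^(356)∘σ₃) ∘ (R^(246)∘σ₂∘σ₆) ∘ (R^(145)∘σ₁∘σ₅) ∘ (R^(123)∘σ₃). -/
/-- Apply `sigma` to the 1st component of a 6-tuple. -/
def sig1 {X : Type*} (sigma : X → X) : X × X × X × X × X × X → X × X × X × X × X × X :=
  fun (x1, x2, x3, x4, x5, x6) => (sigma x1, x2, x3, x4, x5, x6)

/-- Apply `sigma` to the 2nd component of a 6-tuple. -/
def sig2 {X : Type*} (sigma : X → X) : X × X × X × X × X × X → X × X × X × X × X × X :=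
  fun (x1, x2, x3, x4, x5, x6) => (x1, sigma x2, x3, x4, x5, x6)

/-- Apply `sigma` to the 3rd component of a 6-tuple. -/
def sig3 {X : Type*} (sigma : X → X) : X × X × X × X × X × X → X × X × X × X × X × X :=
  fun (x1, x2, x3, x4, x5, x6) => (x1, x2, sigma x3, x4, x5, x6)

/-- Apply `sigma` to the 5th component of a 6-tuple. -/
def sig5 {X : Type*} (sigma : X → X) : X × X × X × X × X × X → X × X × X × X × X × X :=
  fun (x1, x2, x3, x4, x5, x6) => (x1, x2, x3, x4, sigma x5, x6)

/-- Apply `sigma` to the 6th component of a 6-tuple. -/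
def sig6 {X : Type*} (sigma : X → X) : X × X × X × X × X × X → X × X × X × X × X × X :=
  fun (x1, x2, x3, x4, x5, x6) => (x1, x2, x3, x4, x5, sigma x6)

/-- entwining tetrahedron equations from an involutive symmetry. -/
theorem entwining_of_involutive_symmetry {X : Type*} (R : X × X × X → X × X × X)
    (sigma : X → X) (hR : IsTetrahedron R) (hinv : sigma ∘ sigma = id)
    (hsym : triple sigma sigma sigma ∘ R ∘ triple sigma sigma sigma = R) :
    (map123 R ∘ (map145 R ∘ sig1 sigma) ∘ (map246 R ∘ sig2 sigma) ∘ (map356 R ∘ sig3 sigma) =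
      (map356 R ∘ sig3 sigma) ∘ (map246 R ∘ sig2 sigma) ∘ (map145 R ∘ sig1 sigma) ∘ map123 R) ∧
    ((map123 R ∘ sig3 sigma) ∘ (map145 R ∘ sig5 sigma) ∘ (map246 R ∘ sig6 sigma) ∘ map356 R =
      map356 R ∘ (map246 R ∘ sig6 sigma) ∘ (map145 R ∘ sig5 sigma) ∘ (map123 R ∘ sig3 sigma)) ∧
    ((map123 R ∘ sig3 sigma) ∘ (map145 R ∘ sig1 sigma ∘ sig5 sigma) ∘
        (map246 R ∘ sig2 sigma ∘ sig6 sigma) ∘ (map356 R ∘ sig3 sigma) =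
      (map356 R ∘ sig3 sigma) ∘ (map246 R ∘ sig2 sigma ∘ sig6 sigma) ∘
        (map145 R ∘ sig1 sigma ∘ sig5 sigma) ∘ (map123 R ∘ sig3 sigma)) := by
  have hss : ∀ a, sigma (sigma a) = a := fun a => congrFun hinv a
  have hc : ∀ a b c, R (sigma a, sigma b, sigma c) =
      (sigma (R (a,b,c)).1, sigma (R (a,b,c)).2.1, sigma (R (a,b,c)).2.2) := by
    intro a b c
    have h := congrFun hsym (a, b, c)
    simp only [Function.comp_apply, triple] at h
    rw [← h]
    simp only [triple, hss]
  have hc1 : ∀ a b c, (R (sigma a, sigma b, sigma c)).1 = sigma (R (a,b,c)).1 := by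
    intro a b c; rw [hc]
  have hc2 : ∀ a b c, (R (sigma a, sigma b, sigma c)).2.1 = sigma (R (a,b,c)).2.1 := by
    intro a b c; rw [hc]
  have hc3 : ∀ a b c, (R (sigma a, sigma b, sigma c)).2.2 = sigma (R (a,b,c)).2.2 := by
    intro a b c; rw [hc]
  have hCC : ∀ a b c, R (sigma a, sigma b, c) =
      (sigma (R (a,b,sigma c)).1, sigma (R (a,b,sigma c)).2.1, sigma (R (a,b,sigma c)).2.2) := by
    intro a b c
    conv_lhs => rw [show c = sigma (sigma c) from (hss c).symm, hc]
  have hDD : ∀ a b c, R (sigma a, b, sigma c) =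
      (sigma (R (a,sigma b,c)).1, sigma (R (a,sigma b,c)).2.1, sigma (R (a,sigma b,c)).2.2) := by
    intro a b c
    conv_lhs => rw [show b = sigma (sigma b) from (hss b).symm, hc]
  have hEE : ∀ a b c, R (a, sigma b, sigma c) =
      (sigma (R (sigma a,b,c)).1, sigma (R (sigma a,b,c)).2.1, sigma (R (sigma a,b,c)).2.2) := by
    intro a b c
    conv_lhs => rw [show a = sigma (sigma a) from (hss a).symm, hc]
  have hC1 : ∀ a b c, (R (sigma a, sigma b, c)).1 = sigma (R (a,b,sigma c)).1 := by
    intro a b c; rw [hCC]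
  have hC2 : ∀ a b c, (R (sigma a, sigma b, c)).2.1 = sigma (R (a,b,sigma c)).2.1 := by
    intro a b c; rw [hCC]
  have hC3 : ∀ a b c, (R (sigma a, sigma b, c)).2.2 = sigma (R (a,b,sigma c)).2.2 := by
    intro a b c; rw [hCC]
  have hD1 : ∀ a b c, (R (sigma a, b, sigma c)).1 = sigma (R (a,sigma b,c)).1 := by
    intro a b c; rw [hDD]
  have hD2 : ∀ a b c, (R (sigma a, b, sigma c)).2.1 = sigma (R (a,sigma b,c)).2.1 := by
    intro a b c; rw [hDD]
  have hD3 : ∀ a b c, (R (sigma a, b, sigma c)).2.2 = sigma (R (a,sigma b,c)).2.2 := by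
    intro a b c; rw [hDD]
  have hE1 : ∀ a b c, (R (a, sigma b, sigma c)).1 = sigma (R (sigma a,b,c)).1 := by
    intro a b c; rw [hEE]
  have hE2 : ∀ a b c, (R (a, sigma b, sigma c)).2.1 = sigma (R (sigma a,b,c)).2.1 := by
    intro a b c; rw [hEE]
  have hE3 : ∀ a b c, (R (a, sigma b, sigma c)).2.2 = sigma (R (sigma a,b,c)).2.2 := by
    intro a b c; rw [hEE]
  refine ⟨?_, ?_, ?_⟩
  · funext x
    obtain ⟨x1, x2, x3, x4, x5, x6⟩ := x
    have h := congrFun hR (sigma x1, sigma x2, sigma x3, x4, x5, x6)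
    simp only [Function.comp_apply, map123, map145, map246, map356,
      sig1, sig2, sig3, sig5, sig6, hc1, hc2, hc3, hss] at h ⊢
    exact h
  · funext x
    obtain ⟨x1, x2, x3, x4, x5, x6⟩ := x
    have h := congrFun hR (x1, x2, sigma x3, x4, sigma x5, sigma x6)
    simp only [Function.comp_apply, map123, map145, map246, map356,
      sig1, sig2, sig3, sig5, sig6, hc1, hc2, hc3, hss] at h ⊢
    exact h
  · funext x
    obtain ⟨x1, x2, x3, x4, x5, x6⟩ := x
    have h := congrFun hR (sigma x1, sigma x2, x3, x4, sigma x5, sigma x6)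
    simp only [Function.comp_apply, map123, map145, map246, map356,
      sig1, sig2, sig3, sig5, sig6, hc1, hc2, hc3,
      hC1, hC2, hC3, hD1, hD2, hD3, hE1, hE2, hE3, hss] at h ⊢
    exact h
end

section
/- Let R be the AKP map on positive reals, R(x₁,y₁,x₂,y₂,x₃,y₃) = (u₁,v₁,u₂,v₂,u₃,v₃) with u₁ = (x₂ + x₁·x₃)/x₃, u₂ = x₁·x₃, u₃ = x₂·x₃/(x₂ + x₁·x₃), v₁ = x₃·y₂, v₂ = (x₂ + x₁·x₃)·y₃/x₃, v₃ = y₂/x₁, and let R̃ be the map R̃(u₁,v₁,u₂,v₂,u₃,v₃) = (x₁,y₁,x₂,y₂,x₃,y₃) with x₁ = u₁·u₂/(u₂ + u₁·u₃), x₂ = u₁·u₃, x₃ = (u₂ + u₁·u₃)/u₁, y₁ = u₃·v₂, y₂ = u₁·v₁/(u₂ + u₁·u₃), y₃ = v₂/u₁. Then for all positive reals: (i) the components of R(x₁,y₁,x₂,y₂,x₃,y₃) always satisfy v₁ = u₂·v₃ (so R maps the constraint y₁ = x₂·y₃ to v₁ = u₂·v₃); (ii) R̃ ∘ R (x₁,y₁,x₂,y₂,x₃,y₃)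 = (x₁, x₂·y₃, x₂, y₂, x₃, y₃), hence R̃ ∘ R is the identity on the subset where y₁ = x₂·y₃; (iii) R ∘ R̃ (u₁,v₁,u₂,v₂,u₃,v₃) = (u₁, v₁, u₂, v₂, u₃, v₁/u₂), hence R ∘ R̃ is the identity on the subset where v₁ = u₂·v₃. -/
/-- The AKP map on 6-tuples of (positive) reals,
`(x1, y1, x2, y2, x3, y3) ↦ (u1, v1, u2, v2, u3, v3)`. -/
noncomputable def RA : ℝ × ℝ × ℝ × ℝ × ℝ × ℝ → ℝ × ℝ × ℝ × ℝ × ℝ × ℝ :=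
  fun (x1, _y1, x2, y2, x3, y3) =>
    ((x2 + x1 * x3) / x3, x3 * y2, x1 * x3, (x2 + x1 * x3) * y3 / x3,
      x2 * x3 / (x2 + x1 * x3), y2 / x1)

/-- The map `R̃` on 6-tuples of (positive) reals,
`(u1, v1, u2, v2, u3, v3) ↦ (x1, y1, x2, y2, x3, y3)`. -/
noncomputable def RB : ℝ × ℝ × ℝ × ℝ × ℝ × ℝ → ℝ × ℝ × ℝ × ℝ × ℝ × ℝ :=
  fun (u1, v1, u2, v2, u3, _v3) =>
    (u1 * u2 / (u2 + u1 * u3), u3 * v2, u1 * u3, u1 * v1 / (u2 + u1 * u3),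
      (u2 + u1 * u3) / u1, v2 / u1)

/-- (i) the image of `RA` always satisfies `v1 = u2 * v3`;
(ii) `RB ∘ RA` fixes all components except the second, which becomes `x2 * y3`,
hence `RB ∘ RA` is the identity where `y1 = x2 * y3`;
(iii) `RA ∘ RB` fixes all components except the sixth, which becomes `v1 / u2`,
hence `RA ∘ RB` is the identity where `v3 = v1 / u2`. -/
theorem akp_inverse_relations :
    ∀ x1 y1 x2 y2 x3 y3 : ℝ, 0 < x1 → 0 < y1 → 0 < x2 → 0 < y2 → 0 < x3 → 0 < y3 →
      ((RA (x1, y1, x2, y2, x3, y3)).2.1 =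
        (RA (x1, y1, x2, y2, x3, y3)).2.2.1 * (RA (x1, y1, x2, y2, x3, y3)).2.2.2.2.2) ∧
      (RB (RA (x1, y1, x2, y2, x3, y3)) = (x1, x2 * y3, x2, y2, x3, y3)) ∧
      (y1 = x2 * y3 → RB (RA (x1, y1, x2, y2, x3, y3)) = (x1, y1, x2, y2, x3, y3)) ∧
      (RA (RB (x1, y1, x2, y2, x3, y3)) = (x1, y1, x2, y2, x3, y1 / x2)) ∧
      (y1 = x2 * y3 → RA (RB (x1, y1, x2, y2, x3, y3)) = (x1, y1, x2, y2, x3, y3)) := by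
  intro x1 y1 x2 y2 x3 y3 hx1 hy1 hx2 hy2 hx3 hy3
  have h1 : x1 ≠ 0 := hx1.ne'
  have h2 : x2 ≠ 0 := hx2.ne'
  have h3 : x3 ≠ 0 := hx3.ne'
  have hs : x2 + x1 * x3 ≠ 0 := by positivity
  refine ⟨?_, ?_, ?_, ?_, ?_⟩ <;>
    simp only [RA, RB, Prod.mk.injEq] <;>
    try (intro h; subst h)
  all_goals field_simp
  all_goals (try ring); all_goals simp only [and_self]
end

section
/- Let K be a commutative ring and let f, f₁, f₂, f₃, f₁₂, f₂₃, f₁₃, α₁, α₂, α₃ be elements of K satisfying the three copies of the discrete potential KdV equation (f₁₂ − f)·(f₁ − f₂) = α₁ − α₂, (f₂₃ − f)·(f₂ − f₃) = α₂ − α₃, and (f₁₃ − f)·(f₃ − f₁) = α₃ − α₁. Then the discrete potential KP equation holds: f₁₂·(f₁ − f₂) + f₂₃·(f₂ − f₃) + f₁₃·(f₃ − f₁) = 0. -/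
/-- three copies of the discrete potential KdV equation on the faces of a
cube imply the discrete potential KP equation. -/
theorem dpKP_of_dpKdV {K : Type*} [CommRing K]
    (f f1 f2 f3 f12 f23 f13 a1 a2 a3 : K)
    (h12 : (f12 - f) * (f1 - f2) = a1 - a2)
    (h23 : (f23 - f) * (f2 - f3) = a2 - a3)
    (h13 : (f13 - f) * (f3 - f1) = a3 - a1) :
    f12 * (f1 - f2) + f23 * (f2 - f3) + f13 * (f3 - f1) = 0 := by
  linear_combination h12 + h23 + h13
end

section
/- Let K be a division ring and let f₁, f₂, f₃, f₄, f₁₃, f₂₃, f₁₄, f₁₂₃, f₁₃₄ ∈ K with f₁ − f₂, f₄ − f₃, f₄ − f₂, D := (f₁₃ − f₁₄)·f₁ + (f₂₃ − f₁₃)·f₃ + (f₁₄ − f₂₃)·f₄ and D' := (f₁₃ − f₁₄)·f₁ + (f₂₃ − f₁₃)·f₃ + (f₁₄ − f₂₃)·f₂ all nonzero. Define f₁₂ = [f₁₃·(f₁ − f₃) + f₂₃·(f₃ − f₂)]·(f₁ − f₂)⁻¹, f₃₄ = [f₁₃·(f₁ − f₃) + f₁₄·(f₄ − f₁)]·(f₄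 − f₃)⁻¹, f₂₄ = [f₁₃·(f₁ − f₃) + f₂₃·(f₃ − f₂) + f₁₄·(f₄ − f₁)]·(f₄ − f₂)⁻¹, f₂₃₄ = [f₁₃₄·(f₁₄ − f₁₃)·(f₄ − f₁) − f₁₂₃·(f₁₃ − f₂₃)·(f₃ − f₄)]·D⁻¹, f₁₂₄ = [f₁₃₄·(f₁₄ − f₁₃)·(f₂ − f₁) − f₁₂₃·(f₁₃ − f₂₃)·(f₃ − f₂)]·D'⁻¹. Then all eight copies of the discrete potential KP equation on the cubic faces of the 4-dimensional hypercube hold, namely: f₁₂·(f₁−f₂) + f₂₃·(f₂−f₃) + f₁₃·(f₃−f₁) = 0; f₁₂·(f₁−f₂) + f₂₄·(f₂−f₄) + f₁₄·(f₄−f₁) = 0; f₁₃·(f₁−f₃) + f₃₄·(f₃−f₄) + f₁₄·(f₄−f₁) = 0; f₂₃·(f₂−f₃) + f₃₄·(f₃−f₄) + f₂₄·(f₄−f₂) = 0; f₁₂₃·(f₁₂−f₁₃) + f₁₃₄·(f₁₃−f₁₄) + f₁₂₄·(f₁₄−f₁₂) = 0; f₁₂₃·(f₁₂−f₂₃) +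 f₂₃₄·(f₂₃−f₂₄) + f₁₂₄·(f₂₄−f₁₂) = 0; f₁₂₃·(f₁₃−f₂₃) + f₂₃₄·(f₂₃−f₃₄) + f₁₃₄·(f₃₄−f₁₃) = 0; f₁₂₄·(f₁₄−f₂₄) + f₂₃₄·(f₂₄−f₃₄) + f₁₃₄·(f₃₄−f₁₄) = 0. In particular, the discrete potential KP equation is consistent on the 4-dimensional hypercube. -/
private lemma aux_cancel {K : Type*} [DivisionRing K] {d : K} (hd : d ≠ 0) (n c : K) :
    n * d⁻¹ * (d * c) = n * c := by
  rw [mul_assoc, ← mul_assoc d⁻¹, inv_mul_cancel₀ hd, one_mul]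

private lemma aux_cancel_neg {K : Type*} [DivisionRing K] {d : K} (hd : d ≠ 0) (n c : K) :
    n * d⁻¹ * (-d * c) = -(n * c) := by
  rw [neg_mul, mul_neg, aux_cancel hd]

private lemma sub_eq_mul_inv' {K : Type*} [DivisionRing K] {x y z c : K} (hc : c ≠ 0)
    (h : (x - y) * c = z) : x - y = z * c⁻¹ := by
  rw [← h, mul_inv_cancel_right₀ hc]

/-- the discrete potential KP equation is consistent on the 4-dimensional
hypercube: the values `f12`, `f34`, `f24`, `f234`, `f124` computed from generic initial
data satisfy all eight copies of dpKP on the cubic faces of the hypercube. -/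
theorem dpKP_consistency_4D {K : Type*} [DivisionRing K]
    (f1 f2 f3 f4 f13 f23 f14 f123 f134 : K)
    (h12 : f1 - f2 ≠ 0) (h43 : f4 - f3 ≠ 0) (h42 : f4 - f2 ≠ 0)
    (hD : (f13 - f14) * f1 + (f23 - f13) * f3 + (f14 - f23) * f4 ≠ 0)
    (hD' : (f13 - f14) * f1 + (f23 - f13) * f3 + (f14 - f23) * f2 ≠ 0)
    (f12 f34 f24 f234 f124 : K)
    (hf12 : f12 = (f13 * (f1 - f3) + f23 * (f3 - f2)) * (f1 - f2)⁻¹)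
    (hf34 : f34 = (f13 * (f1 - f3) + f14 * (f4 - f1)) * (f4 - f3)⁻¹)
    (hf24 : f24 = (f13 * (f1 - f3) + f23 * (f3 - f2) + f14 * (f4 - f1)) * (f4 - f2)⁻¹)
    (hf234 : f234 = (f134 * (f14 - f13) * (f4 - f1) - f123 * (f13 - f23) * (f3 - f4)) *
      ((f13 - f14) * f1 + (f23 - f13) * f3 + (f14 - f23) * f4)⁻¹)
    (hf124 : f124 = (f134 * (f14 - f13) * (f2 - f1) - f123 * (f13 - f23) * (f3 - f2)) *
      ((f13 - f14) * f1 + (f23 - f13) * f3 + (f14 - f23) * f2)⁻¹) :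
    (f12 * (f1 - f2) + f23 * (f2 - f3) + f13 * (f3 - f1) = 0) ∧
    (f12 * (f1 - f2) + f24 * (f2 - f4) + f14 * (f4 - f1) = 0) ∧
    (f13 * (f1 - f3) + f34 * (f3 - f4) + f14 * (f4 - f1) = 0) ∧
    (f23 * (f2 - f3) + f34 * (f3 - f4) + f24 * (f4 - f2) = 0) ∧
    (f123 * (f12 - f13) + f134 * (f13 - f14) + f124 * (f14 - f12) = 0) ∧
    (f123 * (f12 - f23) + f234 * (f23 - f24) + f124 * (f24 - f12) = 0) ∧
    (f123 * (f13 - f23) + f234 * (f23 - f34) + f134 * (f34 - f13) = 0) ∧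
    (f124 * (f14 - f24) + f234 * (f24 - f34) + f134 * (f34 - f14) = 0) := by
  have k12 : f12 * (f1 - f2) = f13 * (f1 - f3) + f23 * (f3 - f2) := by
    rw [hf12, inv_mul_cancel_right₀ h12]
  have k34 : f34 * (f4 - f3) = f13 * (f1 - f3) + f14 * (f4 - f1) := by
    rw [hf34, inv_mul_cancel_right₀ h43]
  have k24 : f24 * (f4 - f2) = f13 * (f1 - f3) + f23 * (f3 - f2) + f14 * (f4 - f1) := by
    rw [hf24, inv_mul_cancel_right₀ h42]
  have k24n : f24 * (f2 - f4) = -(f24 * (f4 - f2)) := by noncomm_ring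
  have k34n : f34 * (f3 - f4) = -(f34 * (f4 - f3)) := by noncomm_ring
  -- difference formulas
  have d1 : f12 - f13 = (f13 - f23) * (f2 - f3) * (f1 - f2)⁻¹ :=
    sub_eq_mul_inv' h12 (by rw [sub_mul, k12]; noncomm_ring)
  have d2 : f12 - f23 = (f13 - f23) * (f1 - f3) * (f1 - f2)⁻¹ :=
    sub_eq_mul_inv' h12 (by rw [sub_mul, k12]; noncomm_ring)
  have d3 : f14 - f12 =
      (-((f13 - f14) * f1 + (f23 - f13) * f3 + (f14 - f23) * f2)) * (f1 - f2)⁻¹ :=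
    sub_eq_mul_inv' h12 (by rw [sub_mul, k12]; noncomm_ring)
  have d4 : f23 - f24 =
      (-((f13 - f14) * f1 + (f23 - f13) * f3 + (f14 - f23) * f4)) * (f4 - f2)⁻¹ :=
    sub_eq_mul_inv' h42 (by rw [sub_mul, k24]; noncomm_ring)
  have d4' : f24 - f23 =
      ((f13 - f14) * f1 + (f23 - f13) * f3 + (f14 - f23) * f4) * (f4 - f2)⁻¹ :=
    sub_eq_mul_inv' h42 (by rw [sub_mul, k24]; noncomm_ring)
  have d5a : f24 - f14 =
      ((f13 - f14) * f1 + (f23 - f13) * f3 + (f14 - f23) * f2) * (f4 - f2)⁻¹ :=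
    sub_eq_mul_inv' h42 (by rw [sub_mul, k24]; noncomm_ring)
  have d6 : f23 - f34 =
      (-((f13 - f14) * f1 + (f23 - f13) * f3 + (f14 - f23) * f4)) * (f4 - f3)⁻¹ :=
    sub_eq_mul_inv' h43 (by rw [sub_mul, k34]; noncomm_ring)
  have d6' : f34 - f23 =
      ((f13 - f14) * f1 + (f23 - f13) * f3 + (f14 - f23) * f4) * (f4 - f3)⁻¹ :=
    sub_eq_mul_inv' h43 (by rw [sub_mul, k34]; noncomm_ring)
  have d7 : f34 - f13 = (f13 - f14) * (f1 - f4) * (f4 - f3)⁻¹ :=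
    sub_eq_mul_inv' h43 (by rw [sub_mul, k34]; noncomm_ring)
  have d8 : f14 - f24 =
      (-((f13 - f14) * f1 + (f23 - f13) * f3 + (f14 - f23) * f2)) * (f4 - f2)⁻¹ :=
    sub_eq_mul_inv' h42 (by rw [sub_mul, k24]; noncomm_ring)
  have d10 : f34 - f14 = (f13 - f14) * (f1 - f3) * (f4 - f3)⁻¹ :=
    sub_eq_mul_inv' h43 (by rw [sub_mul, k34]; noncomm_ring)
  have d5 : f24 - f12 =
      ((f13 - f14) * f1 + (f23 - f13) * f3 + (f14 - f23) * f2) * (f4 - f2)⁻¹ -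
      ((f13 - f14) * f1 + (f23 - f13) * f3 + (f14 - f23) * f2) * (f1 - f2)⁻¹ := by
    have h : f24 - f12 = (f24 - f14) + (f14 - f12) := by noncomm_ring
    rw [h, d5a, d3]; noncomm_ring
  have d9 : f24 - f34 =
      ((f13 - f14) * f1 + (f23 - f13) * f3 + (f14 - f23) * f4) * (f4 - f2)⁻¹ -
      ((f13 - f14) * f1 + (f23 - f13) * f3 + (f14 - f23) * f4) * (f4 - f3)⁻¹ := by
    have h : f24 - f34 = (f24 - f23) - (f34 - f23) := by noncomm_ring
    rw [h, d4', d6']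
  -- top-face term lemmas
  have t5a : f124 * (f14 - f12) =
      -((f134 * (f14 - f13) * (f2 - f1) - f123 * (f13 - f23) * (f3 - f2)) * (f1 - f2)⁻¹) := by
    rw [hf124, d3, aux_cancel_neg hD']
  have t6b : f234 * (f23 - f24) =
      -((f134 * (f14 - f13) * (f4 - f1) - f123 * (f13 - f23) * (f3 - f4)) * (f4 - f2)⁻¹) := by
    rw [hf234, d4, aux_cancel_neg hD]
  have t6c : f124 * (f24 - f12) =
      (f134 * (f14 - f13) * (f2 - f1) - f123 * (f13 - f23) * (f3 - f2)) * (f4 - f2)⁻¹ -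
      (f134 * (f14 - f13) * (f2 - f1) - f123 * (f13 - f23) * (f3 - f2)) * (f1 - f2)⁻¹ := by
    rw [hf124, d5, mul_sub, aux_cancel hD', aux_cancel hD']
  have t7b : f234 * (f23 - f34) =
      -((f134 * (f14 - f13) * (f4 - f1) - f123 * (f13 - f23) * (f3 - f4)) * (f4 - f3)⁻¹) := by
    rw [hf234, d6, aux_cancel_neg hD]
  have t8a : f124 * (f14 - f24) =
      -((f134 * (f14 - f13) * (f2 - f1) - f123 * (f13 - f23) * (f3 - f2)) * (f4 - f2)⁻¹) := by
    rw [hf124, d8, aux_cancel_neg hD']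
  have t8b : f234 * (f24 - f34) =
      (f134 * (f14 - f13) * (f4 - f1) - f123 * (f13 - f23) * (f3 - f4)) * (f4 - f2)⁻¹ -
      (f134 * (f14 - f13) * (f4 - f1) - f123 * (f13 - f23) * (f3 - f4)) * (f4 - f3)⁻¹ := by
    rw [hf234, d9, mul_sub, aux_cancel hD, aux_cancel hD]
  refine ⟨?_, ?_, ?_, ?_, ?_, ?_, ?_, ?_⟩
  · rw [k12]; noncomm_ring
  · rw [k12, k24n, k24]; noncomm_ring
  · rw [k34n, k34]; noncomm_ring
  · rw [k34n, k34, k24]; noncomm_ring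
  · -- goal 5
    have hX : f134 * (f14 - f13) * ((f1 - f2) * (f1 - f2)⁻¹) + f134 * (f13 - f14) = 0 := by
      rw [mul_inv_cancel₀ h12, mul_one]; noncomm_ring
    rw [d1, t5a, ← hX]; noncomm_ring
  · -- goal 6
    have hX : (f123 * (f13 - f23) + f134 * (f14 - f13)) * ((f1 - f2) * (f1 - f2)⁻¹) -
        (f123 * (f13 - f23) + f134 * (f14 - f13)) * ((f4 - f2) * (f4 - f2)⁻¹) = 0 := by
      rw [mul_inv_cancel₀ h12, mul_inv_cancel₀ h42, mul_one, sub_self]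
    rw [d2, t6b, t6c, ← hX]; noncomm_ring
  · -- goal 7
    have hX : f123 * (f13 - f23) -
        f123 * (f13 - f23) * ((f4 - f3) * (f4 - f3)⁻¹) = 0 := by
      rw [mul_inv_cancel₀ h43, mul_one, sub_self]
    rw [t7b, d7, ← hX]; noncomm_ring
  · -- goal 8
    have hX : (f134 * (f13 - f14) - f123 * (f13 - f23)) * ((f4 - f3) * (f4 - f3)⁻¹) -
        (f134 * (f13 - f14) - f123 * (f13 - f23)) * ((f4 - f2) * (f4 - f2)⁻¹) = 0 := by
      rw [mul_inv_cancel₀ h43, mul_inv_cancel₀ h42, mul_one, sub_self]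
    rw [t8a, t8b, d10, ← hX]; noncomm_ring
end
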